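/- Let s ≥ 1, c > 0, and φ(t) = exp(-(c·log(1/t))^{1/s}) for small t > 0, with inverse u = φ⁻¹. Then the integral ∫₀ (u(t)/u'(t))^{n-1} dt/t^n diverges if and only if s ≤ n/(n-1). -/

import Mathlib

open Filter Set Real


lemma aux_cont (p a b : ℝ) (ha : 0 < a) (hb : b < 1) :
    ContinuousOn (fun t : ℝ => (t * (-Real.log t) ^ p)⁻¹) (Icc a b) := by
  apply ContinuousOn.inv₀
  · exact continuousOn_id.mul (((Real.continuousOn_log.mono (by
      intro x hx; exact ne_of_gt (lt_of_lt_of_le ha hx.1))).neg).rpow_const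
      (fun x hx => Or.inl (by
        have : Real.log x < 0 := Real.log_neg (lt_of_lt_of_le ha hx.1) (lt_of_le_of_lt hx.2 hb)
        simpa using ne_of_gt (neg_pos.mpr this))))
  · intro x hx
    have hx0 : 0 < x := lt_of_lt_of_le ha hx.1
    have hlx : 0 < -Real.log x := neg_pos.mpr (Real.log_neg hx0 (lt_of_le_of_lt hx.2 hb))
    exact ne_of_gt (mul_pos hx0 (Real.rpow_pos_of_pos hlx p))

lemma aux_ftc (p : ℝ) (hp : p ≠ 1) (a b : ℝ) (ha : 0 < a) (hb : b < 1) (hab : a ≤ b) :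
    ∫ t in a..b, (t * (-Real.log t) ^ p)⁻¹
      = (-Real.log b) ^ (1-p) / (p-1) - (-Real.log a) ^ (1-p) / (p-1) := by
  apply intervalIntegral.integral_eq_sub_of_hasDerivAt
  · intro x hx
    rw [uIcc_of_le hab] at hx
    have hx0 : 0 < x := lt_of_lt_of_le ha hx.1
    have hlx : 0 < -Real.log x := neg_pos.mpr (Real.log_neg hx0 (lt_of_le_of_lt hx.2 hb))
    have h1 : HasDerivAt (fun t : ℝ => -Real.log t) (-x⁻¹) x := (Real.hasDerivAt_log hx0.ne').neg
    have h2 := (h1.rpow_const (p := 1-p) (Or.inl hlx.ne')).div_const (p-1)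
    refine h2.congr_deriv ?_
    have e1 : (-Real.log x) ^ (1 - p - 1) = ((-Real.log x) ^ p)⁻¹ := by
      rw [show (1:ℝ) - p - 1 = -p by ring, Real.rpow_neg hlx.le]
    rw [e1]
    have hLp : ((-Real.log x) ^ p) ≠ 0 := ne_of_gt (Real.rpow_pos_of_pos hlx p)
    have hp1 : p - 1 ≠ 0 := sub_ne_zero.mpr hp
    field_simp
    ring
  · exact (aux_cont p a b ha hb).intervalIntegrable_of_Icc hab

lemma aux_ftc_one (a b : ℝ) (ha : 0 < a) (hb : b < 1) (hab : a ≤ b) :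
    ∫ t in a..b, (t * (-Real.log t) ^ (1:ℝ))⁻¹
      = (-Real.log (-Real.log b)) - (-Real.log (-Real.log a)) := by
  apply intervalIntegral.integral_eq_sub_of_hasDerivAt
  · intro x hx
    rw [uIcc_of_le hab] at hx
    have hx0 : 0 < x := lt_of_lt_of_le ha hx.1
    have hlx : 0 < -Real.log x := neg_pos.mpr (Real.log_neg hx0 (lt_of_le_of_lt hx.2 hb))
    have h1 : HasDerivAt (fun t : ℝ => -Real.log t) (-x⁻¹) x := (Real.hasDerivAt_log hx0.ne').neg
    have h2 : HasDerivAt (fun y => -Real.log (-Real.log y)) _ x := (h1.log hlx.ne').neg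
    refine h2.congr_deriv ?_
    rw [Real.rpow_one]
    field_simp
  · exact (aux_cont 1 a b ha hb).intervalIntegrable_of_Icc hab

/-- Let `s ≥ 1`, `c > 0`, `n ≥ 2`, and
`φ(t) = exp(-(c log(1/t))^{1/s})` for small `t > 0`, with inverse `u = φ⁻¹`
(differentiable). Then `∫₀^{r₀} (u(t)/u'(t))^{n-1} dt/t^n` diverges if and only
if `s ≤ n/(n-1)`. -/
theorem stmt2
    (n : ℕ) (hn : 2 ≤ n) (s c : ℝ) (hs : 1 ≤ s) (hc : 0 < c)
    (r₀ : ℝ) (hr₀ : 0 < r₀) (hr₀1 : r₀ < 1)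
    (u : ℝ → ℝ)
    (hu_pos : ∀ t ∈ Ioo (0:ℝ) 1, 0 < u t ∧ u t < 1)
    (hu_inv : ∀ t ∈ Ioo (0:ℝ) 1,
      Real.exp (-(c * Real.log (1 / u t)) ^ (1 / s)) = t)
    (hu_diff : ∀ t ∈ Ioo (0:ℝ) 1, DifferentiableAt ℝ u t)
    (hu_deriv_pos : ∀ t ∈ Ioo (0:ℝ) 1, 0 < deriv u t) :
    Tendsto (fun ε => ∫ t in ε..r₀, (u t / deriv u t) ^ (n - 1) / t ^ n)
        (nhdsWithin 0 (Ioi 0)) atTop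
      ↔ s ≤ (n : ℝ) / (n - 1) := by
  have hn1 : (1:ℝ) < (n:ℝ) := by exact_mod_cast lt_of_lt_of_le one_lt_two hn
  have hs0 : (0:ℝ) < s := lt_of_lt_of_le one_pos hs
  set m : ℕ := n - 1 with hm
  have hmcast : (m:ℝ) = (n:ℝ) - 1 := by
    rw [hm, Nat.cast_sub (le_trans one_le_two hn)]; norm_num
  set p : ℝ := (s-1) * ((n:ℝ)-1) with hpdef
  have key : (s ≤ (n:ℝ)/((n:ℝ)-1)) ↔ p ≤ 1 := by
    rw [le_div_iff₀ (by linarith)]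
    constructor <;> intro h <;> nlinarith
  rw [key]
  set K : ℝ := (c/s)^m with hK
  have hKpos : 0 < K := pow_pos (div_pos hc hs0) m
  -- formula for u
  have hu_eq : ∀ t ∈ Ioo (0:ℝ) 1, u t = Real.exp (-((-Real.log t)^s / c)) := by
    intro t ht
    obtain ⟨hu0, hu1⟩ := hu_pos t ht
    have hlt : 0 < -Real.log (u t) := neg_pos.mpr (Real.log_neg hu0 hu1)
    have h := hu_inv t ht
    have h2 : (c * Real.log (1 / u t)) ^ (1/s) = -Real.log t := by
      have h' := congrArg Real.log h
      rw [Real.log_exp] at h'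
      linarith
    have hbase : 0 ≤ c * Real.log (1 / u t) := by
      rw [one_div, Real.log_inv]
      exact le_of_lt (mul_pos hc hlt)
    have h3 : c * Real.log (1/u t) = (-Real.log t)^s := by
      have h'' := congrArg (fun x : ℝ => x ^ s) h2
      try simp only at h''
      rw [← Real.rpow_mul hbase, one_div_mul_cancel (ne_of_gt hs0),
        Real.rpow_one] at h''
      exact h''
    rw [one_div, Real.log_inv] at h3
    have h4 : Real.log (u t) = -((-Real.log t)^s / c) := by
      field_simp
      linarith
    rw [← Real.exp_log hu0, h4]
  -- derivative of u
  have hder : ∀ t ∈ Ioo (0:ℝ) 1,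
      deriv u t = u t * (s * (-Real.log t)^(s-1) / (c*t)) := by
    intro t ht
    have hlt : 0 < -Real.log t := neg_pos.mpr (Real.log_neg ht.1 ht.2)
    have h1 : HasDerivAt (fun x : ℝ => -Real.log x) (-t⁻¹) t :=
      (Real.hasDerivAt_log ht.1.ne').neg
    have h2 := h1.rpow_const (p := s) (Or.inl hlt.ne')
    have h4 : HasDerivAt (fun x => Real.exp (-((-Real.log x)^s / c))) _ t :=
      ((h2.div_const c).neg).exp
    have hev : u =ᶠ[nhds t] (fun x => Real.exp (-((-Real.log x)^s / c))) := by
      filter_upwards [Ioo_mem_nhds ht.1 ht.2] with x hx using hu_eq x hx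
    rw [hev.deriv_eq, h4.deriv, hu_eq t ht]
    congr 1
    field_simp
  -- the integrand
  have hint : ∀ t ∈ Ioo (0:ℝ) 1,
      (u t / deriv u t)^m / t^n = K * (t * (-Real.log t)^p)⁻¹ := by
    intro t ht
    have hlt : 0 < -Real.log t := neg_pos.mpr (Real.log_neg ht.1 ht.2)
    have hu0 := (hu_pos t ht).1
    have hLs : 0 < (-Real.log t)^(s-1) := Real.rpow_pos_of_pos hlt _
    have hLp : 0 < (-Real.log t)^p := Real.rpow_pos_of_pos hlt _
    have hratio : u t / deriv u t = c * t / (s * (-Real.log t)^(s-1)) := by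
      rw [hder t ht]
      field_simp
    have hLpow : ((-Real.log t)^(s-1))^m = (-Real.log t)^p := by
      rw [← Real.rpow_natCast ((-Real.log t)^(s-1)) m, ← Real.rpow_mul hlt.le,
        hpdef, hmcast]
    have hn_eq : n = m + 1 := by omega
    rw [hratio, hn_eq, pow_succ, div_pow, mul_pow, mul_pow, hLpow, hK]
    have ht0 : t ≠ 0 := ht.1.ne'
    field_simp
    rw [← mul_pow, mul_div_cancel₀ _ hs0.ne']
  -- reduce the integral
  have hIcongr : ∀ ε ∈ Ioo (0:ℝ) r₀,
      (∫ t in ε..r₀, (u t / deriv u t)^m / t^n)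
        = K * ∫ t in ε..r₀, (t * (-Real.log t)^p)⁻¹ := by
    intro ε hε
    rw [← intervalIntegral.integral_const_mul]
    apply intervalIntegral.integral_congr
    intro x hx
    rw [uIcc_of_le hε.2.le] at hx
    exact hint x ⟨lt_of_lt_of_le hε.1 hx.1, lt_of_le_of_lt hx.2 hr₀1⟩
  have hmem : Ioo (0:ℝ) r₀ ∈ nhdsWithin (0:ℝ) (Ioi 0) :=
    Ioo_mem_nhdsGT_of_mem ⟨le_refl 0, hr₀⟩
  have hlogT : Tendsto (fun ε : ℝ => -Real.log ε) (nhdsWithin (0:ℝ) (Ioi 0)) atTop :=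
    tendsto_neg_atBot_atTop.comp Real.tendsto_log_nhdsGT_zero
  clear_value m p K
  constructor
  · -- divergence → p ≤ 1
    intro hT
    by_contra hgt
    push_neg at hgt
    have hev : ∀ᶠ ε in nhdsWithin (0:ℝ) (Ioi 0),
        (∫ t in ε..r₀, (u t / deriv u t)^m / t^n)
          = K * ((-Real.log r₀)^(1-p)/(p-1) - (-Real.log ε)^(1-p)/(p-1)) := by
      filter_upwards [hmem] with ε hε
      rw [hIcongr ε hε, aux_ftc p (by linarith) ε r₀ hε.1 hr₀1 hε.2.le]
    have h0 : Tendsto (fun x : ℝ => x^(1-p)) atTop (nhds 0) := by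
      have := tendsto_rpow_neg_atTop (y := p - 1) (by linarith)
      simpa [show -(p-1) = 1-p by ring] using this
    have hten : Tendsto
        (fun ε => K * ((-Real.log r₀)^(1-p)/(p-1) - (-Real.log ε)^(1-p)/(p-1)))
        (nhdsWithin (0:ℝ) (Ioi 0))
        (nhds (K * ((-Real.log r₀)^(1-p)/(p-1) - 0/(p-1)))) := by
      exact Tendsto.const_mul _ (tendsto_const_nhds.sub ((h0.comp hlogT).div_const _))
    exact not_tendsto_atTop_of_tendsto_nhds (hten.congr' (hev.mono fun ε h => h.symm)) hT
  · -- p ≤ 1 → divergence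
    intro hple
    rcases eq_or_lt_of_le hple with hpe | hplt
    · -- p = 1
      have hev : ∀ᶠ ε in nhdsWithin (0:ℝ) (Ioi 0),
          (∫ t in ε..r₀, (u t / deriv u t)^m / t^n)
            = K * ((-Real.log (-Real.log r₀)) - (-Real.log (-Real.log ε))) := by
        filter_upwards [hmem] with ε hε
        rw [hIcongr ε hε, hpe, aux_ftc_one ε r₀ hε.1 hr₀1 hε.2.le]
      refine Filter.Tendsto.congr' (hev.mono fun ε h => h.symm) ?_
      have h1 : Tendsto (fun ε : ℝ => Real.log (-Real.log ε))
          (nhdsWithin (0:ℝ) (Ioi 0)) atTop := Real.tendsto_log_atTop.comp hlogT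
      have h3 := tendsto_atTop_add_const_left _
        (K * (-Real.log (-Real.log r₀))) (h1.const_mul_atTop hKpos)
      refine h3.congr fun ε => ?_
      ring
    · -- p < 1
      have hev : ∀ᶠ ε in nhdsWithin (0:ℝ) (Ioi 0),
          (∫ t in ε..r₀, (u t / deriv u t)^m / t^n)
            = K * ((-Real.log r₀)^(1-p)/(p-1) - (-Real.log ε)^(1-p)/(p-1)) := by
        filter_upwards [hmem] with ε hε
        rw [hIcongr ε hε, aux_ftc p (by linarith) ε r₀ hε.1 hr₀1 hε.2.le]
      refine Filter.Tendsto.congr' (hev.mono fun ε h => h.symm) ?_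
      have h1 : Tendsto (fun ε : ℝ => (-Real.log ε)^(1-p))
          (nhdsWithin (0:ℝ) (Ioi 0)) atTop :=
        (tendsto_rpow_atTop (by linarith)).comp hlogT
      have h3 := tendsto_atTop_add_const_left _
        (K * ((-Real.log r₀)^(1-p)/(p-1)))
        (h1.const_mul_atTop (div_pos hKpos (by linarith : (0:ℝ) < 1 - p)))
      refine h3.congr fun ε => ?_
      have hkey : K / (1 - p) * (-Real.log ε) ^ (1 - p)
          = -(K * ((-Real.log ε) ^ (1 - p) / (p - 1))) := by
        rw [div_mul_eq_mul_div, mul_div_assoc, show (1:ℝ) - p = -(p-1) by ring,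
          div_neg, mul_neg]
      rw [mul_sub, hkey]
      ring
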